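/- The map S₁(x₁,x₂,y₁,y₂,z₁,z₂,t₁,t₂) = (x₁y₁z₂/(x₂z₁+x₁z₂), y₂, (x₂z₁+x₁z₂)/z₂, x₂, t₂x₂y₁z₁/(y₂(x₂z₁+x₁z₂)), t₂, t₁x₂z₂/(t₂y₂), z₂) satisfies the set-theoretical 4-simplex equation wherever all denominators are nonzero. -/

import Mathlib

set_option maxHeartbeats 4000000


/-- The Hirota-type 4-simplex map `S₁`. -/
noncomputable def hirotaS1 :
    (ℂ × ℂ) × (ℂ × ℂ) × (ℂ × ℂ) × (ℂ × ℂ) → (ℂ × ℂ) × (ℂ × ℂ) × (ℂ × ℂ) × (ℂ × ℂ) :=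
  fun ((x1, x2), (y1, y2), (z1, z2), (t1, t2)) =>
    ((x1 * y1 * z2 / (x2 * z1 + x1 * z2), y2),
     ((x2 * z1 + x1 * z2) / z2, x2),
     (t2 * x2 * y1 * z1 / (y2 * (x2 * z1 + x1 * z2)), t2),
     (t1 * x2 * z2 / (t2 * y2), z2))

/-- All denominators occurring in the Hirota-type map `S₁` are nonzero. -/
def hirotaS1Ok : (ℂ × ℂ) × (ℂ × ℂ) × (ℂ × ℂ) × (ℂ × ℂ) → Prop :=
  fun ((x1, x2), (y1, y2), (z1, z2), (t1, t2)) =>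
    x2 * z1 + x1 * z2 ≠ 0 ∧ z2 ≠ 0 ∧ y2 ≠ 0 ∧ t2 ≠ 0

section Lifts
variable {X : Type*} (S : X × X × X × X → X × X × X × X)

/-- `S` acting on factors 1,2,3,4 of a 10-tuple. -/
def lift1234 : X × X × X × X × X × X × X × X × X × X → X × X × X × X × X × X × X × X × X × X :=
  fun (p1, p2, p3, p4, p5, p6, p7, p8, p9, p10) =>
    let q := S (p1, p2, p3, p4)
    (q.1, q.2.1, q.2.2.1, q.2.2.2, p5, p6, p7, p8, p9, p10)

/-- `S` acting on factors 1,5,6,7 of a 10-tuple. -/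
def lift1567 : X × X × X × X × X × X × X × X × X × X → X × X × X × X × X × X × X × X × X × X :=
  fun (p1, p2, p3, p4, p5, p6, p7, p8, p9, p10) =>
    let q := S (p1, p5, p6, p7)
    (q.1, p2, p3, p4, q.2.1, q.2.2.1, q.2.2.2, p8, p9, p10)

/-- `S` acting on factors 2,5,8,9 of a 10-tuple. -/
def lift2589 : X × X × X × X × X × X × X × X × X × X → X × X × X × X × X × X × X × X × X × X :=
  fun (p1, p2, p3, p4, p5, p6, p7, p8, p9, p10) =>
    let q := S (p2, p5, p8, p9)
    (p1, q.1, p3, p4, q.2.1, p6, p7, q.2.2.1, q.2.2.2, p10)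

/-- `S` acting on factors 3,6,8,10 of a 10-tuple. -/
def lift368X : X × X × X × X × X × X × X × X × X × X → X × X × X × X × X × X × X × X × X × X :=
  fun (p1, p2, p3, p4, p5, p6, p7, p8, p9, p10) =>
    let q := S (p3, p6, p8, p10)
    (p1, p2, q.1, p4, p5, q.2.1, p7, q.2.2.1, p9, q.2.2.2)

/-- `S` acting on factors 4,7,9,10 of a 10-tuple. -/
def lift479X : X × X × X × X × X × X × X × X × X × X → X × X × X × X × X × X × X × X × X × X :=
  fun (p1, p2, p3, p4, p5, p6, p7, p8, p9, p10) =>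
    let q := S (p4, p7, p9, p10)
    (p1, p2, p3, q.1, p5, p6, q.2.1, p8, q.2.2.1, q.2.2.2)

end Lifts

section Projs
variable {X : Type*}

/-- Projection on factors 1,2,3,4. -/
def proj1234 : X × X × X × X × X × X × X × X × X × X → X × X × X × X :=
  fun (p1, p2, p3, p4, _, _, _, _, _, _) => (p1, p2, p3, p4)

/-- Projection on factors 1,5,6,7. -/
def proj1567 : X × X × X × X × X × X × X × X × X × X → X × X × X × X :=
  fun (p1, _, _, _, p5, p6, p7, _, _, _) => (p1, p5, p6, p7)

/-- Projection on factors 2,5,8,9. -/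
def proj2589 : X × X × X × X × X × X × X × X × X × X → X × X × X × X :=
  fun (_, p2, _, _, p5, _, _, p8, p9, _) => (p2, p5, p8, p9)

/-- Projection on factors 3,6,8,10. -/
def proj368X : X × X × X × X × X × X × X × X × X × X → X × X × X × X :=
  fun (_, _, p3, _, _, p6, _, p8, _, p10) => (p3, p6, p8, p10)

/-- Projection on factors 4,7,9,10. -/
def proj479X : X × X × X × X × X × X × X × X × X × X → X × X × X × X :=
  fun (_, _, _, p4, _, _, p7, _, p9, p10) => (p4, p7, p9, p10)

end Projs

/-- The Hirota-type map `S₁` satisfies the set-theoretical 4-simplex equation,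
wherever all denominators are nonzero. -/
theorem hirotaS1_four_simplex (p : (ℂ × ℂ) × (ℂ × ℂ) × (ℂ × ℂ) × (ℂ × ℂ) × (ℂ × ℂ) × (ℂ × ℂ) × (ℂ × ℂ) × (ℂ × ℂ) × (ℂ × ℂ) × (ℂ × ℂ))
    (h1 : hirotaS1Ok (proj479X p))
    (h2 : hirotaS1Ok (proj368X (lift479X hirotaS1 p)))
    (h3 : hirotaS1Ok (proj2589 (lift368X hirotaS1 (lift479X hirotaS1 p))))
    (h4 : hirotaS1Ok (proj1567 (lift2589 hirotaS1 (lift368X hirotaS1 (lift479X hirotaS1 p)))))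
    (h5 : hirotaS1Ok (proj1234 (lift1567 hirotaS1 (lift2589 hirotaS1 (lift368X hirotaS1 (lift479X hirotaS1 p))))))
    (h6 : hirotaS1Ok (proj1234 p))
    (h7 : hirotaS1Ok (proj1567 (lift1234 hirotaS1 p)))
    (h8 : hirotaS1Ok (proj2589 (lift1567 hirotaS1 (lift1234 hirotaS1 p))))
    (h9 : hirotaS1Ok (proj368X (lift2589 hirotaS1 (lift1567 hirotaS1 (lift1234 hirotaS1 p)))))
    (h10 : hirotaS1Ok (proj479X (lift368X hirotaS1 (lift2589 hirotaS1 (lift1567 hirotaS1 (lift1234 hirotaS1 p)))))) :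
    lift1234 hirotaS1 (lift1567 hirotaS1 (lift2589 hirotaS1 (lift368X hirotaS1 (lift479X hirotaS1 p))))
      = lift479X hirotaS1 (lift368X hirotaS1 (lift2589 hirotaS1 (lift1567 hirotaS1 (lift1234 hirotaS1 p)))) := by
  obtain ⟨⟨a1,a2⟩,⟨b1,b2⟩,⟨c1,c2⟩,⟨d1,d2⟩,⟨e1,e2⟩,⟨f1,f2⟩,⟨g1,g2⟩,⟨h1',h2'⟩,⟨i1,i2⟩,⟨j1,j2⟩⟩ := p
  simp only [hirotaS1, hirotaS1Ok, lift1234, lift1567, lift2589, lift368X, lift479X, proj1234, proj1567, proj2589, proj368X, proj479X] at h1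
  obtain ⟨h1a,h1b,h1c,h1d⟩ := h1
  field_simp at h1a
  simp only [hirotaS1, hirotaS1Ok, lift1234, lift1567, lift2589, lift368X, lift479X, proj1234, proj1567, proj2589, proj368X, proj479X] at h2
  obtain ⟨h2a,h2b,h2c,h2d⟩ := h2
  field_simp at h2a
  simp only [hirotaS1, hirotaS1Ok, lift1234, lift1567, lift2589, lift368X, lift479X, proj1234, proj1567, proj2589, proj368X, proj479X] at h3
  obtain ⟨h3a,h3b,h3c,h3d⟩ := h3
  field_simp at h3a
  simp only [hirotaS1, hirotaS1Ok, lift1234, lift1567, lift2589, lift368X, lift479X, proj1234, proj1567, proj2589, proj368X, proj479X] at h4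
  obtain ⟨h4a,h4b,h4c,h4d⟩ := h4
  field_simp at h4a
  simp only [hirotaS1, hirotaS1Ok, lift1234, lift1567, lift2589, lift368X, lift479X, proj1234, proj1567, proj2589, proj368X, proj479X] at h5
  obtain ⟨h5a,h5b,h5c,h5d⟩ := h5
  field_simp at h5a
  simp only [hirotaS1, hirotaS1Ok, lift1234, lift1567, lift2589, lift368X, lift479X, proj1234, proj1567, proj2589, proj368X, proj479X] at h6
  obtain ⟨h6a,h6b,h6c,h6d⟩ := h6
  field_simp at h6a
  simp only [hirotaS1, hirotaS1Ok, lift1234, lift1567, lift2589, lift368X, lift479X, proj1234, proj1567, proj2589, proj368X, proj479X] at h7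
  obtain ⟨h7a,h7b,h7c,h7d⟩ := h7
  field_simp at h7a
  simp only [hirotaS1, hirotaS1Ok, lift1234, lift1567, lift2589, lift368X, lift479X, proj1234, proj1567, proj2589, proj368X, proj479X] at h8
  obtain ⟨h8a,h8b,h8c,h8d⟩ := h8
  field_simp at h8a
  simp only [hirotaS1, hirotaS1Ok, lift1234, lift1567, lift2589, lift368X, lift479X, proj1234, proj1567, proj2589, proj368X, proj479X] at h9
  obtain ⟨h9a,h9b,h9c,h9d⟩ := h9
  field_simp at h9a
  simp only [hirotaS1, hirotaS1Ok, lift1234, lift1567, lift2589, lift368X, lift479X, proj1234, proj1567, proj2589, proj368X, proj479X] at h10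
  obtain ⟨h10a,h10b,h10c,h10d⟩ := h10
  field_simp at h10a
  have eB3 : b2 * (i2 * c2 * f1 * h1' / (f2 * (c2 * h1' + c1 * h2'))) + b1 * i2 = (b2 * (i2 * c2 * f1 * h1') + b1 * i2 * (f2 * (c2 * h1' + c1 * h2'))) / (f2 * (c2 * h1' + c1 * h2')) := by
    field_simp; try ring
  have eB4 : a2 * ((c2 * h1' + c1 * h2') / h2') + a1 * c2 = (a2 * (c2 * h1' + c1 * h2') + a1 * c2 * h2') / h2' := by
    field_simp; try ring
  have eB7 : b2 * f1 + a1 * b1 * c2 / (a2 * c1 + a1 * c2) * f2 = (b2 * f1 * (a2 * c1 + a1 * c2) + a1 * b1 * c2 * f2) / (a2 * c1 + a1 * c2) := by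
    field_simp; try ring
  have eB8 : a2 * h1' + (a2 * c1 + a1 * c2) / c2 * h2' = (a2 * h1' * c2 + (a2 * c1 + a1 * c2) * h2') / c2 := by
    field_simp; try ring
  have eB10 : c2 * (i1 * a2 * h2' / (i2 * b2)) + d1 * a2 * c2 / (d2 * b2) * h2' = (c2 * (i1 * a2 * h2') * (d2 * b2) + d1 * a2 * c2 * h2' * (i2 * b2)) / (i2 * b2 * (d2 * b2)) := by
    field_simp; try ring
  have eB5 : b2 * (c1 * f1 * h2' / (c2 * h1' + c1 * h2')) + a1 * ((b2 * (i2 * c2 * f1 * h1') + b1 * i2 * (f2 * (c2 * h1' + c1 * h2'))) / (f2 * (c2 * h1' + c1 * h2')) / i2) * c2 / ((a2 * (c2 * h1' + c1 * h2') + a1 * c2 * h2') / h2') * f2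
      = (b2 * (c1 * f1 * h2') * (f2 * (c2 * h1' + c1 * h2') * i2 * (a2 * (c2 * h1' + c1 * h2') + a1 * c2 * h2')) + a1 * (b2 * (i2 * c2 * f1 * h1') + b1 * i2 * (f2 * (c2 * h1' + c1 * h2'))) * c2 * h2' * f2 * (c2 * h1' + c1 * h2')) / ((c2 * h1' + c1 * h2') * (f2 * (c2 * h1' + c1 * h2')) * i2 * (a2 * (c2 * h1' + c1 * h2') + a1 * c2 * h2')) := by
    have hR : (a2 * (c2 * h1' + c1 * h2') + a1 * c2 * h2') ≠ 0 := fun h => (div_ne_zero_iff.mp h4a).1 (by linear_combination h)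
    generalize (a2 * (c2 * h1' + c1 * h2') + a1 * c2 * h2') = R at hR ⊢
    field_simp; try ring
  have eB9 : d2 * (i2 * a2 * ((b2 * f1 * (a2 * c1 + a1 * c2) + a1 * b1 * c2 * f2) / (a2 * c1 + a1 * c2) / f2) * h1' / (b2 * ((a2 * h1' * c2 + (a2 * c1 + a1 * c2) * h2') / c2))) + d2 * a2 * b1 * c1 / (b2 * (a2 * c1 + a1 * c2)) * i2
      = (d2 * (i2 * a2 * (b2 * f1 * (a2 * c1 + a1 * c2) + a1 * b1 * c2 * f2) * h1' * c2) * (b2 * (a2 * c1 + a1 * c2)) + d2 * a2 * b1 * c1 * i2 * ((a2 * c1 + a1 * c2) * f2 * (b2 * (a2 * h1' * c2 + (a2 * c1 + a1 * c2) * h2')))) / ((a2 * c1 + a1 * c2) * f2 * (b2 * (a2 * h1' * c2 + (a2 * c1 + a1 * c2) * h2')) * (b2 * (a2 * c1 + a1 * c2))) := by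
    have hV : (a2 * h1' * c2 + (a2 * c1 + a1 * c2) * h2') ≠ 0 := (div_ne_zero_iff.mp h8a).1
    have hU : (a2 * c1 + a1 * c2) ≠ 0 := (div_ne_zero_iff.mp h7a).2
    generalize (a2 * h1' * c2 + (a2 * c1 + a1 * c2) * h2') = V at hV ⊢
    field_simp; try ring
  have hN3 : (b2 * (i2 * c2 * f1 * h1') + b1 * i2 * (f2 * (c2 * h1' + c1 * h2'))) ≠ 0 := fun h => (div_ne_zero_iff.mp h3a).1 (by linear_combination h)
  have hN4 : (a2 * (c2 * h1' + c1 * h2') + a1 * c2 * h2') ≠ 0 := fun h => (div_ne_zero_iff.mp h4a).1 (by linear_combination h)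
  have hN5 : (b2 * (c1 * f1 * h2') * (f2 * (c2 * h1' + c1 * h2') * i2 * (a2 * (c2 * h1' + c1 * h2') + a1 * c2 * h2')) + a1 * (b2 * (i2 * c2 * f1 * h1') + b1 * i2 * (f2 * (c2 * h1' + c1 * h2'))) * c2 * h2' * f2 * (c2 * h1' + c1 * h2')) ≠ 0 := by
    intro h; apply h5a
    have hR : ((c2 * h1' + c1 * h2') * a2 + h2' * c2 * a1) ≠ 0 := by intro h'; apply hN4; linear_combination h'
    have k : (h2' * f2 * (c2 * h1' + c1 * h2') * i2) * (b2 * c1 * f1 * ((c2 * h1' + c1 * h2') * a2 + h2' * c2 * a1) + c2 * a1 * (b2 * f1 * c2 * h1' + (c2 * h1' + c1 * h2') * f2 * b1)) = 0 := by linear_combination h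
    have k' := (mul_eq_zero.mp k).resolve_left (mul_ne_zero (mul_ne_zero (mul_ne_zero h2b h2c) h2a) h1b)
    rw [add_div' _ _ _ hR]
    simp only [div_eq_zero_iff, mul_eq_zero]
    left; right; left; linear_combination k'
  have hN7 : (b2 * f1 * (a2 * c1 + a1 * c2) + a1 * b1 * c2 * f2) ≠ 0 := (div_ne_zero_iff.mp h7a).1
  have hN8 : (a2 * h1' * c2 + (a2 * c1 + a1 * c2) * h2') ≠ 0 := (div_ne_zero_iff.mp h8a).1
  have hN9 : (d2 * (i2 * a2 * (b2 * f1 * (a2 * c1 + a1 * c2) + a1 * b1 * c2 * f2) * h1' * c2) * (b2 * (a2 * c1 + a1 * c2)) + d2 * a2 * b1 * c1 * i2 * ((a2 * c1 + a1 * c2) * f2 * (b2 * (a2 * h1' * c2 + (a2 * c1 + a1 * c2) * h2')))) ≠ 0 := by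
    intro h; apply h9a
    have hV : (a2 * c2 * h1' + (a2 * c1 + a1 * c2) * h2') ≠ 0 := by intro h'; apply hN8; linear_combination h'
    have hU : (a2 * c1 + a1 * c2) ≠ 0 := (div_ne_zero_iff.mp h7a).2
    have k : (b2 * (a2 * c1 + a1 * c2)) * (d2 * i2 * a2 * (c2 * (b2 * f1 * (a2 * c1 + a1 * c2) + a1 * b1 * c2 * f2) * h1' + b1 * c1 * f2 * (a2 * c2 * h1' + (a2 * c1 + a1 * c2) * h2'))) = 0 := by linear_combination h
    have k' := (mul_eq_zero.mp k).resolve_left (mul_ne_zero h4c hU)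
    rw [div_add' _ _ _ hV, ← mul_div_assoc, div_div, div_eq_zero_iff]
    left; linear_combination k'
  have hN10 : (c2 * (i1 * a2 * h2') * (d2 * b2) + d1 * a2 * c2 * h2' * (i2 * b2)) ≠ 0 := by
    intro h; apply (div_ne_zero_iff.mp h10a).1
    have k : b2 * (c2 * a2 * h2' * (i1 * d2 + i2 * d1)) = 0 := by linear_combination h
    exact (mul_eq_zero.mp k).resolve_left h4c
  simp only [hirotaS1, hirotaS1Ok, lift1234, lift1567, lift2589, lift368X, lift479X, proj1234, proj1567, proj2589, proj368X, proj479X]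
  refine Prod.ext ?_ (Prod.ext ?_ (Prod.ext ?_ (Prod.ext ?_ (Prod.ext ?_ (Prod.ext ?_ (Prod.ext ?_ (Prod.ext ?_ (Prod.ext ?_ ?_)))))))) <;>
    refine Prod.ext ?_ ?_ <;> simp only
  all_goals try rfl
  all_goals (
    simp only [eB3, eB4, eB7, eB8, eB10]
    try simp only [eB5, eB9]
    field_simp
    try rw [div_eq_div_iff (by (repeat' apply mul_ne_zero) <;> first | assumption | (intro h; apply hN3; linear_combination i2 * h) | (intro h; apply hN4; linear_combination h) | (intro h; apply hN5; linear_combination (h2' * f2 * (c2 * h1' + c1 * h2') * i2) * h) | (intro h; apply h6a; linear_combination h) | (intro h; apply hN7; linear_combination h) | (intro h; apply hN8; linear_combination h) | (intro h; apply hN10; linear_combination (c2 * h2' * d2 * b2 * i1 + d1 * c2 * h2' * i2 * b2) * h) | (intro h; apply hN9; linear_combination (d2 * i2 * a2 * b2 * (a2 * c1 + a1 * c2)) * h)) (by (repeat' apply mul_ne_zero) <;> first | assumption | (intro h; apply hN3; linear_combination i2 * h) | (intro h; apply hN4; linear_combination h) | (intro h; apply hN5; linear_combination (h2' * f2 * (c2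 * h1' + c1 * h2') * i2) * h) | (intro h; apply h6a; linear_combination h) | (intro h; apply hN7; linear_combination h) | (intro h; apply hN8; linear_combination h) | (intro h; apply hN10; linear_combination (c2 * h2' * d2 * b2 * i1 + d1 * c2 * h2' * i2 * b2) * h) | (intro h; apply hN9; linear_combination (d2 * i2 * a2 * b2 * (a2 * c1 + a1 * c2)) * h))]
    try rw [div_eq_iff (by (repeat' apply mul_ne_zero) <;> first | assumption | (intro h; apply hN3; linear_combination i2 * h) | (intro h; apply hN4; linear_combination h) | (intro h; apply hN5; linear_combination (h2' * f2 * (c2 * h1' + c1 * h2') * i2) * h) | (intro h; apply h6a; linear_combination h) | (intro h; apply hN7; linear_combination h) | (intro h; apply hN8; linear_combination h) | (intro h; apply hN10; linear_combination (c2 * h2' * d2 * b2 * i1 + d1 * c2 * h2' * i2 * b2) * h) | (intro h; apply hN9; linear_combination (d2 * i2 * a2 * b2 * (a2 * c1 + a1 * c2)) * h))]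
    try rw [eq_div_iff (by (repeat' apply mul_ne_zero) <;> first | assumption | (intro h; apply hN3; linear_combination i2 * h) | (intro h; apply hN4; linear_combination h) | (intro h; apply hN5; linear_combination (h2' * f2 * (c2 * h1' + c1 * h2') * i2) * h) | (intro h; apply h6a; linear_combination h) | (intro h; apply hN7; linear_combination h) | (intro h; apply hN8; linear_combination h) | (intro h; apply hN10; linear_combination (c2 * h2' * d2 * b2 * i1 + d1 * c2 * h2' * i2 * b2) * h) | (intro h; apply hN9; linear_combination (d2 * i2 * a2 * b2 * (a2 * c1 + a1 * c2)) * h))]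
    all_goals ring)
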